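/- Let G be a cubic graph and M1, M2 disjoint matchings with |M1 ∪ M2| maximum. Then every connected component of G − M1 − M2 is acyclic and has at most three edges; hence every component is a single vertex, a single edge (P2), a path with two edges (P3), a path with three edges (P4), or a star K_{1,3}. -/

import Mathlib

open SimpleGraph

/-- A matching in `G` given as a set of edges: edges of `G`, pairwise vertex-disjoint. -/
def IsMatchingSet {V : Type*} (G : SimpleGraph V) (M : Set (Sym2 V)) : Prop :=
  M ⊆ G.edgeSet ∧ ∀ e ∈ M, ∀ f ∈ M, e ≠ f → ∀ v, v ∈ e → v ∉ f

/-- `M1, M2` are disjoint matchings of `G` with `|M1 ∪ M2|` maximum over all pairs of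
disjoint matchings of `G`. -/
def MaxDisjointPair {V : Type*} (G : SimpleGraph V) (M1 M2 : Set (Sym2 V)) : Prop :=
  IsMatchingSet G M1 ∧ IsMatchingSet G M2 ∧ Disjoint M1 M2 ∧
  ∀ N1 N2 : Set (Sym2 V), IsMatchingSet G N1 → IsMatchingSet G N2 → Disjoint N1 N2 →
    (N1 ∪ N2).ncard ≤ (M1 ∪ M2).ncard

/-- Adjacency in `Ĝ = G − M1 − M2`: adjacency via an edge of `G` not in `M1 ∪ M2`. -/
def hatAdj {V : Type*} (G : SimpleGraph V) (M1 M2 : Set (Sym2 V)) (x y : V) : Prop :=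
  G.Adj x y ∧ s(x, y) ∉ M1 ∪ M2

namespace Stmt6Aux
set_option linter.unusedSectionVars false

variable {V : Type*}

/-- `x` is covered by (some edge of) `M`. -/
def Cov (M : Set (Sym2 V)) (x : V) : Prop := ∃ e ∈ M, x ∈ e

lemma hat_symm {G : SimpleGraph V} {M1 M2 : Set (Sym2 V)} {x y : V}
    (h : hatAdj G M1 M2 x y) : hatAdj G M1 M2 y x := by
  refine ⟨h.1.symm, ?_⟩
  rw [Sym2.eq_swap]; exact h.2

lemma hat_swap {G : SimpleGraph V} {M1 M2 : Set (Sym2 V)} {x y : V}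
    (h : hatAdj G M1 M2 x y) : hatAdj G M2 M1 x y := by
  refine ⟨h.1, ?_⟩
  rw [Set.union_comm]; exact h.2

lemma maxpair_symm {G : SimpleGraph V} {M1 M2 : Set (Sym2 V)} (h : MaxDisjointPair G M1 M2) :
    MaxDisjointPair G M2 M1 :=
  ⟨h.2.1, h.1, h.2.2.1.symm, fun N1 N2 a b c => by
    rw [Set.union_comm M2 M1]; exact h.2.2.2 N1 N2 a b c⟩

lemma same_partner {G : SimpleGraph V} {M : Set (Sym2 V)} (hM : IsMatchingSet G M)
    {x a b : V} (h1 : s(x, a) ∈ M) (h2 : s(x, b) ∈ M) : a = b := by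
  by_cases heq : s(x, a) = s(x, b)
  · rcases Sym2.eq_iff.mp heq with ⟨-, h⟩ | ⟨hxb, hax⟩
    · exact h
    · exact hax.trans hxb
  · exact absurd (Sym2.mem_mk_left x b) (hM.2 _ h1 _ h2 heq x (Sym2.mem_mk_left x a))

variable [Fintype V]

lemma improve {G : SimpleGraph V} {M1 M2 N1 N2 : Set (Sym2 V)} (hmax : MaxDisjointPair G M1 M2)
    (h1 : IsMatchingSet G N1) (h2 : IsMatchingSet G N2) (hd : Disjoint N1 N2)
    (hgt : (M1 ∪ M2).ncard < (N1 ∪ N2).ncard) : False := by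
  have := hmax.2.2.2 N1 N2 h1 h2 hd; omega

lemma F1 {G : SimpleGraph V} {M1 M2 : Set (Sym2 V)} (hmax : MaxDisjointPair G M1 M2) {x y : V}
    (h : hatAdj G M1 M2 x y) : Cov M1 x ∨ Cov M1 y := by
  by_contra hc
  push_neg at hc
  obtain ⟨hx, hy⟩ := hc
  have hnotin : s(x, y) ∉ M1 ∪ M2 := h.2
  have hmatch : IsMatchingSet G (insert s(x, y) M1) := by
    constructor
    · exact Set.insert_subset (G.mem_edgeSet.mpr h.1) hmax.1.1
    · intro e he f hf hef t hte htf
      rcases he with rfl | he <;> rcases hf with rfl | hf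
      · exact hef rfl
      · rcases Sym2.mem_iff.mp hte with rfl | rfl
        · exact hx ⟨f, hf, htf⟩
        · exact hy ⟨f, hf, htf⟩
      · rcases Sym2.mem_iff.mp htf with rfl | rfl
        · exact hx ⟨e, he, hte⟩
        · exact hy ⟨e, he, hte⟩
      · exact hmax.1.2 e he f hf hef t hte htf
  have hdisj : Disjoint (insert s(x, y) M1) M2 := by
    rw [Set.disjoint_left]
    intro e he hem2
    rcases he with rfl | he
    · exact hnotin (Or.inr hem2)
    · exact Set.disjoint_left.mp hmax.2.2.1 he hem2
  refine improve hmax hmatch hmax.2.1 hdisj ?_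
  rw [Set.insert_union, Set.ncard_insert_of_notMem hnotin (Set.toFinite _)]
  omega

lemma F2 {G : SimpleGraph V} [DecidableRel G.Adj] {M1 M2 : Set (Sym2 V)}
    (hmax : MaxDisjointPair G M1 M2) (hcubic : ∀ t : V, G.degree t = 3) {x y z : V}
    (hy : hatAdj G M1 M2 x y) (hz : hatAdj G M1 M2 x z) (hyz : y ≠ z)
    (h1 : Cov M1 x) (h2 : Cov M2 x) : False := by
  classical
  obtain ⟨e1, he1, hxe1⟩ := h1
  obtain ⟨e2, he2, hxe2⟩ := h2
  have h12 : e1 ≠ e2 := fun h => Set.disjoint_left.mp hmax.2.2.1 he1 (h ▸ he2)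
  have h1y : e1 ≠ s(x, y) := fun h => hy.2 (Or.inl (h ▸ he1))
  have h1z : e1 ≠ s(x, z) := fun h => hz.2 (Or.inl (h ▸ he1))
  have h2y : e2 ≠ s(x, y) := fun h => hy.2 (Or.inr (h ▸ he2))
  have h2z : e2 ≠ s(x, z) := fun h => hz.2 (Or.inr (h ▸ he2))
  have hyzne : s(x, y) ≠ s(x, z) := by
    intro h
    rcases Sym2.eq_iff.mp h with ⟨-, h'⟩ | ⟨h1', -⟩
    · exact hyz h'
    · exact hz.1.ne h1'
  have hsub : ({e1, e2, s(x, y), s(x, z)} : Finset (Sym2 V)) ⊆ G.incidenceFinset x := by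
    intro e he
    simp only [Finset.mem_insert, Finset.mem_singleton] at he
    rw [mem_incidenceFinset]
    rcases he with rfl | rfl | rfl | rfl
    · exact ⟨hmax.1.1 he1, hxe1⟩
    · exact ⟨hmax.2.1.1 he2, hxe2⟩
    · exact ⟨G.mem_edgeSet.mpr hy.1, Sym2.mem_mk_left x y⟩
    · exact ⟨G.mem_edgeSet.mpr hz.1, Sym2.mem_mk_left x z⟩
  have hcard : ({e1, e2, s(x, y), s(x, z)} : Finset (Sym2 V)).card = 4 := by
    rw [Finset.card_insert_of_notMem (by simp [h12, h1y, h1z]),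
      Finset.card_insert_of_notMem (by simp [h2y, h2z]), Finset.card_pair hyzne]
  have hle := Finset.card_le_card hsub
  rw [hcard, card_incidenceFinset_eq_degree, hcubic] at hle
  omega

lemma swapcase {G : SimpleGraph V} {M1 M2 : Set (Sym2 V)}
    (hmax : MaxDisjointPair G M1 M2) {u v : V}
    (huv : hatAdj G M1 M2 u v)
    (hu2 : ¬ Cov M2 u) (hv1 : ¬ Cov M1 v) (hv2 : Cov M2 v)
    (hnr : ¬ (fromEdgeSet (M1 ∪ M2)).Reachable v u) : False := by
  classical
  set K := fromEdgeSet (M1 ∪ M2) with hK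
  set D : Set V := {x | K.Reachable v x} with hD
  have hEdge : ∀ e, e ∈ M1 ∪ M2 → ∀ x ∈ e, ∀ y ∈ e, x ∈ D → y ∈ D := by
    intro e
    induction e using Sym2.ind with
    | _ a b =>
      intro he x hx y hy hxD
      have hab : a ≠ b := by
        have hes : s(a, b) ∈ G.edgeSet := by
          rcases he with h' | h'
          · exact hmax.1.1 h'
          · exact hmax.2.1.1 h'
        exact (G.mem_edgeSet.mp hes).ne
      have hadj : K.Adj a b := by
        rw [hK, fromEdgeSet_adj]; exact ⟨he, hab⟩
      rcases Sym2.mem_iff.mp hx with rfl | rfl <;> rcases Sym2.mem_iff.mp hy with rfl | rfl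
      · exact hxD
      · exact hxD.trans hadj.reachable
      · exact hxD.trans hadj.symm.reachable
      · exact hxD
  set E : Set (Sym2 V) := {e | ∃ x ∈ e, x ∈ D} with hE
  have hED : ∀ e, e ∈ M1 ∪ M2 → e ∈ E → ∀ x ∈ e, x ∈ D := by
    rintro e he ⟨x0, hx0, hx0D⟩ x hx
    exact hEdge e he x0 hx0 x hx hx0D
  have hvD : v ∈ D := Reachable.refl v
  have huD : u ∉ D := hnr
  have huvE : s(u, v) ∉ M1 ∪ M2 := huv.2
  set N1 : Set (Sym2 V) := (M1 \ E) ∪ (M2 ∩ E) with hN1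
  set N2 : Set (Sym2 V) := insert s(u, v) ((M2 \ E) ∪ (M1 ∩ E)) with hN2
  have hmatch1 : IsMatchingSet G N1 := by
    constructor
    · rintro e (he | he)
      · exact hmax.1.1 he.1
      · exact hmax.2.1.1 he.1
    · rintro e (⟨he1, heE⟩ | ⟨he2, heE⟩) f (⟨hf1, hfE⟩ | ⟨hf2, hfE⟩) hef x hxe hxf
      · exact hmax.1.2 e he1 f hf1 hef x hxe hxf
      · exact heE ⟨x, hxe, hED f (Or.inr hf2) hfE x hxf⟩
      · exact hfE ⟨x, hxf, hED e (Or.inr he2) heE x hxe⟩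
      · exact hmax.2.1.2 e he2 f hf2 hef x hxe hxf
  have hmatch2 : IsMatchingSet G N2 := by
    constructor
    · rintro e (rfl | he | he)
      · exact G.mem_edgeSet.mpr huv.1
      · exact hmax.2.1.1 he.1
      · exact hmax.1.1 he.1
    · rintro e (rfl | he) f (rfl | hf) hef x hxe hxf
      · exact hef rfl
      · rcases Sym2.mem_iff.mp hxe with rfl | rfl
        · rcases hf with ⟨hf2, -⟩ | ⟨hf1, hfE⟩
          · exact hu2 ⟨f, hf2, hxf⟩
          · exact huD (hED f (Or.inl hf1) hfE x hxf)
        · rcases hf with ⟨hf2, hfE⟩ | ⟨hf1, -⟩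
          · exact hfE ⟨x, hxf, hvD⟩
          · exact hv1 ⟨f, hf1, hxf⟩
      · rcases Sym2.mem_iff.mp hxf with rfl | rfl
        · rcases he with ⟨he2, -⟩ | ⟨he1, heE⟩
          · exact hu2 ⟨e, he2, hxe⟩
          · exact huD (hED e (Or.inl he1) heE x hxe)
        · rcases he with ⟨he2, heE⟩ | ⟨he1, -⟩
          · exact heE ⟨x, hxe, hvD⟩
          · exact hv1 ⟨e, he1, hxe⟩
      · rcases he with ⟨he2, heE⟩ | ⟨he1, heE⟩ <;> rcases hf with ⟨hf2, hfE⟩ | ⟨hf1, hfE⟩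
        · exact hmax.2.1.2 e he2 f hf2 hef x hxe hxf
        · exact heE ⟨x, hxe, hED f (Or.inl hf1) hfE x hxf⟩
        · exact hfE ⟨x, hxf, hED e (Or.inl he1) heE x hxe⟩
        · exact hmax.1.2 e he1 f hf1 hef x hxe hxf
  have hdisj : Disjoint N1 N2 := by
    rw [Set.disjoint_left]
    rintro e (he | he) (rfl | hf | hf)
    · exact huvE (Or.inl he.1)
    · exact Set.disjoint_left.mp hmax.2.2.1 he.1 hf.1
    · exact he.2 hf.2
    · exact huvE (Or.inr he.1)
    · exact hf.2 he.2
    · exact Set.disjoint_left.mp hmax.2.2.1 hf.1 he.1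
  refine improve hmax hmatch1 hmatch2 hdisj ?_
  have hunion : N1 ∪ N2 = insert s(u, v) (M1 ∪ M2) := by
    ext e
    simp only [hN1, hN2, Set.mem_union, Set.mem_insert_iff, Set.mem_diff, Set.mem_inter_iff]
    tauto
  rw [hunion, Set.ncard_insert_of_notMem huvE (Set.toFinite _)]
  omega

section ThreeLeaf

lemma endpoint_nbr {K : SimpleGraph V} {a b : V} (P : K.Walk a b) (hab : a ≠ b) :
    ∃ s, K.Adj a s ∧ s ∈ P.support := by
  cases P with
  | nil => exact absurd rfl hab
  | cons h q =>
    exact ⟨_, h, by rw [SimpleGraph.Walk.support_cons]; exact List.mem_cons_of_mem _ q.start_mem_support⟩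

lemma path_internal {K : SimpleGraph V} {a b : V} (P : K.Walk a b) :
    P.IsPath → ∀ x ∈ P.support, x ≠ a → x ≠ b →
      ∃ y z, y ≠ z ∧ K.Adj x y ∧ K.Adj x z ∧ y ∈ P.support ∧ z ∈ P.support := by
  induction P with
  | nil =>
    intro _ x hx hxa _
    rw [SimpleGraph.Walk.support_nil, List.mem_singleton] at hx
    exact absurd hx hxa
  | @cons a s b h Q ih =>
    intro hP x hx hxa hxb
    rw [SimpleGraph.Walk.support_cons, List.mem_cons] at hx
    rcases hx with rfl | hx
    · exact absurd rfl hxa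
    rcases (SimpleGraph.Walk.cons_isPath_iff h Q).mp hP with ⟨hQ, haQ⟩
    by_cases hxs : x = s
    · subst hxs
      cases Q with
      | nil => exact absurd rfl hxb
      | @cons s s2 b h2 Q2 =>
        refine ⟨a, s2, ?_, h.symm, h2, ?_, ?_⟩
        · intro hcontra
          apply haQ
          rw [hcontra, SimpleGraph.Walk.support_cons]
          exact List.mem_cons_of_mem _ Q2.start_mem_support
        · rw [SimpleGraph.Walk.support_cons]; exact List.mem_cons_self
        · rw [SimpleGraph.Walk.support_cons, SimpleGraph.Walk.support_cons]
          exact List.mem_cons_of_mem _ (List.mem_cons_of_mem _ Q2.start_mem_support)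
    · obtain ⟨y, z, hyz, hy, hz, hyS, hzS⟩ := ih hQ x hx hxs hxb
      exact ⟨y, z, hyz, hy, hz,
        by rw [SimpleGraph.Walk.support_cons]; exact List.mem_cons_of_mem _ hyS,
        by rw [SimpleGraph.Walk.support_cons]; exact List.mem_cons_of_mem _ hzS⟩

lemma crossing {K : SimpleGraph V} {T : Set V} {w v : V} (Q : K.Walk w v) :
    w ∉ T → v ∈ T → ∃ y z, K.Adj y z ∧ y ∉ T ∧ z ∈ T := by
  induction Q with
  | nil => intro hw hv; exact absurd hv hw
  | @cons w s v h Q ih =>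
    intro hw hv
    by_cases hs : s ∈ T
    · exact ⟨w, s, h, hw, hs⟩
    · exact ih hs hv

lemma threeLeaf {K : SimpleGraph V} {u v w : V}
    (hdeg : ∀ x a b c, K.Adj x a → K.Adj x b → K.Adj x c → a = b ∨ a = c ∨ b = c)
    (hu : ∀ a b, K.Adj u a → K.Adj u b → a = b)
    (hv : ∀ a b, K.Adj v a → K.Adj v b → a = b)
    (hw : ∀ a b, K.Adj w a → K.Adj w b → a = b)
    (huv : u ≠ v) (huw : u ≠ w) (hwv : w ≠ v)
    (hru : K.Reachable u v) (hrw : K.Reachable w v) : False := by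
  classical
  obtain ⟨p0⟩ := hru
  set P := p0.bypass with hPdef
  have hP : P.IsPath := p0.bypass_isPath
  have hwP : w ∉ P.support := by
    intro hmem
    obtain ⟨y, z, hyz, hy, hz, -, -⟩ := path_internal P hP w hmem (Ne.symm huw) hwv
    exact hyz (hw y z hy hz)
  obtain ⟨q⟩ := hrw
  obtain ⟨y, z, hadj, hyT, hzT⟩ :=
    crossing (T := {x | x ∈ P.support}) q hwP P.end_mem_support
  by_cases hzu : z = u
  · subst hzu
    obtain ⟨s, hus, hsP⟩ := endpoint_nbr P huv
    have : y = s := hu y s hadj.symm hus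
    exact hyT (this ▸ hsP)
  by_cases hzv : z = v
  · subst hzv
    obtain ⟨s, hvs, hsP⟩ := endpoint_nbr P.reverse (Ne.symm huv)
    have hys : y = s := hv y s hadj.symm hvs
    apply hyT
    subst hys
    rw [SimpleGraph.Walk.support_reverse] at hsP
    exact List.mem_reverse.mp hsP
  · obtain ⟨y1, y2, h12, ha1, ha2, hS1, hS2⟩ := path_internal P hP z hzT hzu hzv
    rcases hdeg z y1 y2 y ha1 ha2 hadj.symm with h | h | h
    · exact h12 h
    · exact hyT (h ▸ hS1)
    · exact hyT (h ▸ hS2)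

end ThreeLeaf

lemma F3 {G : SimpleGraph V} {M1 M2 : Set (Sym2 V)}
    (hmax : MaxDisjointPair G M1 M2) {u v w : V}
    (huv : hatAdj G M1 M2 u v) (hvw : hatAdj G M1 M2 v w) (huw : u ≠ w)
    (hu1 : Cov M1 u) (hu2 : ¬ Cov M2 u) (hw1 : Cov M1 w) (hw2 : ¬ Cov M2 w)
    (hv2 : Cov M2 v) (hv1 : ¬ Cov M1 v) : False := by
  classical
  set K := fromEdgeSet (M1 ∪ M2) with hK
  have hKadj : ∀ {x y : V}, K.Adj x y → s(x, y) ∈ M1 ∪ M2 := by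
    intro x y h; rw [hK, fromEdgeSet_adj] at h; exact h.1
  by_cases hru : K.Reachable v u
  · by_cases hrw : K.Reachable v w
    · -- three leaves in one component of K
      have hdeg : ∀ x a b c, K.Adj x a → K.Adj x b → K.Adj x c → a = b ∨ a = c ∨ b = c := by
        intro x a b c ha hb hc
        rcases hKadj ha with ha' | ha' <;> rcases hKadj hb with hb' | hb' <;>
          rcases hKadj hc with hc' | hc'
        · exact Or.inl (same_partner hmax.1 ha' hb')
        · exact Or.inl (same_partner hmax.1 ha' hb')
        · exact Or.inr (Or.inl (same_partner hmax.1 ha' hc'))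
        · exact Or.inr (Or.inr (same_partner hmax.2.1 hb' hc'))
        · exact Or.inr (Or.inr (same_partner hmax.1 hb' hc'))
        · exact Or.inr (Or.inl (same_partner hmax.2.1 ha' hc'))
        · exact Or.inl (same_partner hmax.2.1 ha' hb')
        · exact Or.inl (same_partner hmax.2.1 ha' hb')
      have hleaf1 : ∀ (t : V), ¬ Cov M2 t → ∀ a b, K.Adj t a → K.Adj t b → a = b := by
        intro t ht a b ha hb
        have ha' : s(t, a) ∈ M1 := by
          rcases hKadj ha with h' | h'
          · exact h'
          · exact absurd ⟨_, h', Sym2.mem_mk_left t a⟩ ht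
        have hb' : s(t, b) ∈ M1 := by
          rcases hKadj hb with h' | h'
          · exact h'
          · exact absurd ⟨_, h', Sym2.mem_mk_left t b⟩ ht
        exact same_partner hmax.1 ha' hb'
      have hleafv : ∀ a b, K.Adj v a → K.Adj v b → a = b := by
        intro a b ha hb
        have ha' : s(v, a) ∈ M2 := by
          rcases hKadj ha with h' | h'
          · exact absurd ⟨_, h', Sym2.mem_mk_left v a⟩ hv1
          · exact h'
        have hb' : s(v, b) ∈ M2 := by
          rcases hKadj hb with h' | h'
          · exact absurd ⟨_, h', Sym2.mem_mk_left v b⟩ hv1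
          · exact h'
        exact same_partner hmax.2.1 ha' hb'
      have hune : u ≠ v := fun h => hv1 (h ▸ hu1)
      have hwne : w ≠ v := fun h => hv1 (h ▸ hw1)
      exact threeLeaf hdeg (hleaf1 u hu2) hleafv (hleaf1 w hw2) hune huw hwne hru.symm hrw.symm
    · exact swapcase hmax (hat_symm hvw) hw2 hv1 hv2 hrw
  · exact swapcase hmax huv hu2 hv1 hv2 hru

lemma triple {G : SimpleGraph V} [DecidableRel G.Adj] {M1 M2 : Set (Sym2 V)}
    (hmax : MaxDisjointPair G M1 M2) (hcubic : ∀ t : V, G.degree t = 3)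
    {a b c : V} (hab : hatAdj G M1 M2 a b) (hbc : hatAdj G M1 M2 b c) (hac : a ≠ c)
    (ha2 : ∃ y z, y ≠ z ∧ hatAdj G M1 M2 a y ∧ hatAdj G M1 M2 a z)
    (hc2 : ∃ y z, y ≠ z ∧ hatAdj G M1 M2 c y ∧ hatAdj G M1 M2 c z) : False := by
  obtain ⟨ay, az, hayz, haY, haZ⟩ := ha2
  obtain ⟨cy, cz, hcyz, hcY, hcZ⟩ := hc2
  have hmax' := maxpair_symm hmax
  have notbotha : ¬ (Cov M1 a ∧ Cov M2 a) := fun ⟨h1', h2'⟩ => F2 hmax hcubic haY haZ hayz h1' h2'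
  have notbothb : ¬ (Cov M1 b ∧ Cov M2 b) :=
    fun ⟨h1', h2'⟩ => F2 hmax hcubic (hat_symm hab) hbc hac h1' h2'
  have notbothc : ¬ (Cov M1 c ∧ Cov M2 c) := fun ⟨h1', h2'⟩ => F2 hmax hcubic hcY hcZ hcyz h1' h2'
  have hbcov : Cov M1 b ∨ Cov M2 b := by
    by_contra hcon
    push_neg at hcon
    have h1a : Cov M1 a := (F1 hmax hab).resolve_right hcon.1
    have h2a : Cov M2 a := by
      have := F1 hmax' (hat_swap hab)
      exact this.resolve_right hcon.2
    exact notbotha ⟨h1a, h2a⟩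
  rcases hbcov with hb1 | hb2
  · have hb2' : ¬ Cov M2 b := fun h => notbothb ⟨hb1, h⟩
    have h2a : Cov M2 a := (F1 hmax' (hat_swap (hat_symm hab))).resolve_left hb2'
    have h1a : ¬ Cov M1 a := fun h => notbotha ⟨h, h2a⟩
    have h2c : Cov M2 c := (F1 hmax' (hat_swap hbc)).resolve_left hb2'
    have h1c : ¬ Cov M1 c := fun h => notbothc ⟨h, h2c⟩
    exact F3 hmax' (hat_swap hab) (hat_swap hbc) hac h2a h1a h2c h1c hb1 hb2'
  · have hb1' : ¬ Cov M1 b := fun h => notbothb ⟨h, hb2⟩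
    have h1a : Cov M1 a := (F1 hmax (hat_symm hab)).resolve_left hb1'
    have h2a : ¬ Cov M2 a := fun h => notbotha ⟨h1a, h⟩
    have h1c : Cov M1 c := (F1 hmax hbc).resolve_left hb1'
    have h2c : ¬ Cov M2 c := fun h => notbothc ⟨h1c, h⟩
    exact F3 hmax hab hbc hac h1a h2a h1c h2c hb2 hb1'

lemma reach {K : SimpleGraph V} {S : Set V} (hcl : ∀ a ∈ S, ∀ b, K.Adj a b → b ∈ S) :
    ∀ {x y : V}, K.Reachable x y → x ∈ S → y ∈ S := by
  have aux : ∀ {x y : V} (p : K.Walk x y), x ∈ S → y ∈ S := by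
    intro x y p
    induction p with
    | nil => exact fun h => h
    | cons h q ih => exact fun hx => ih (hcl _ hx _ h)
  intro x y hr hx
  obtain ⟨p⟩ := hr
  exact aux p hx


lemma ncard_incidenceSet {G : SimpleGraph V} [DecidableRel G.Adj] (t : V) :
    (G.incidenceSet t).ncard = G.degree t := by
  classical
  rw [Set.ncard_eq_toFinset_card']
  have h : (G.incidenceSet t).toFinset = G.incidenceFinset t := by
    ext e
    simp [SimpleGraph.mem_incidenceFinset]
  rw [h, card_incidenceFinset_eq_degree]

lemma hat_inc_bound {G : SimpleGraph V} [DecidableRel G.Adj] {M1 M2 : Set (Sym2 V)}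
    (hmax : MaxDisjointPair G M1 M2) (hcubic : ∀ t : V, G.degree t = 3) {t : V} {et : Sym2 V}
    (het : et ∈ M1 ∪ M2) (hte : t ∈ et) :
    ((G.deleteEdges (M1 ∪ M2)).incidenceSet t).ncard ≤ 2 := by
  classical
  have hetE : et ∈ G.edgeSet := by
    rcases het with h | h
    · exact hmax.1.1 h
    · exact hmax.2.1.1 h
  have hsub : (G.deleteEdges (M1 ∪ M2)).incidenceSet t ⊆ G.incidenceSet t \ {et} := by
    intro e he
    have he1 : e ∈ (G.deleteEdges (M1 ∪ M2)).edgeSet := he.1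
    rw [edgeSet_deleteEdges] at he1
    refine ⟨⟨he1.1, he.2⟩, ?_⟩
    intro h
    apply he1.2
    rw [Set.mem_singleton_iff.mp h]
    exact het
  have h1 := Set.ncard_le_ncard hsub (Set.toFinite _)
  have h2 : (G.incidenceSet t \ {et}).ncard = (G.incidenceSet t).ncard - 1 :=
    Set.ncard_diff_singleton_of_mem ⟨hetE, hte⟩
  have h3 : (G.incidenceSet t).ncard = 3 := by rw [ncard_incidenceSet, hcubic]
  omega

lemma center {G : SimpleGraph V} [DecidableRel G.Adj] {M1 M2 : Set (Sym2 V)}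
    (hmax : MaxDisjointPair G M1 M2) (hcubic : ∀ t : V, G.degree t = 3) {b a1 a2 : V}
    (h11 : ∀ z, (G.deleteEdges (M1 ∪ M2)).Adj b z → Cov M1 z ∧ Cov M2 z)
    (hadj : (G.deleteEdges (M1 ∪ M2)).Adj a1 a2)
    (hr : (G.deleteEdges (M1 ∪ M2)).Reachable b a1) :
    a1 = b ∨ a2 = b := by
  set Gh := G.deleteEdges (M1 ∪ M2) with hGh
  have hhat : ∀ {x y : V}, Gh.Adj x y → hatAdj G M1 M2 x y := by
    intro x y h; rw [hGh, SimpleGraph.deleteEdges_adj] at h; exact h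
  have huniq : ∀ z, Cov M1 z → Cov M2 z → ∀ t t', Gh.Adj z t → Gh.Adj z t' → t = t' := by
    intro z hz1 hz2 t t' ht ht'
    by_contra hne
    exact F2 hmax hcubic (hhat ht) (hhat ht') hne hz1 hz2
  set S : Set V := {x | x = b ∨ Gh.Adj b x} with hS
  have hcl : ∀ x ∈ S, ∀ y, Gh.Adj x y → y ∈ S := by
    intro x hx y hy
    rcases hx with rfl | hx
    · exact Or.inr hy
    · obtain ⟨hx1, hx2⟩ := h11 x hx
      exact Or.inl (huniq x hx1 hx2 y b hy hx.symm)
  have hbS : b ∈ S := Or.inl rfl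
  have ha1S : a1 ∈ S := reach hcl hr hbS
  have ha2S : a2 ∈ S := reach hcl (hr.trans hadj.reachable) hbS
  rcases ha1S with h | hn1
  · exact Or.inl h
  rcases ha2S with h | hn2
  · exact Or.inr h
  obtain ⟨h1', h2'⟩ := h11 a1 hn1
  exact Or.inr (huniq a1 h1' h2' a2 b hadj hn1.symm)

lemma center2 {G : SimpleGraph V} [DecidableRel G.Adj] {M1 M2 : Set (Sym2 V)}
    (hmax : MaxDisjointPair G M1 M2) (hcubic : ∀ t : V, G.degree t = 3) {u v a1 a2 : V}
    (h11u : ∀ z, (G.deleteEdges (M1 ∪ M2)).Adj u z → z ≠ v → Cov M1 z ∧ Cov M2 z)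
    (h11v : ∀ z, (G.deleteEdges (M1 ∪ M2)).Adj v z → z ≠ u → Cov M1 z ∧ Cov M2 z)
    (hadj : (G.deleteEdges (M1 ∪ M2)).Adj a1 a2)
    (hr : (G.deleteEdges (M1 ∪ M2)).Reachable u a1) :
    a1 = u ∨ a1 = v ∨ a2 = u ∨ a2 = v := by
  set Gh := G.deleteEdges (M1 ∪ M2) with hGh
  have hhat : ∀ {x y : V}, Gh.Adj x y → hatAdj G M1 M2 x y := by
    intro x y h; rw [hGh, SimpleGraph.deleteEdges_adj] at h; exact h
  have huniq : ∀ z, Cov M1 z → Cov M2 z → ∀ t t', Gh.Adj z t → Gh.Adj z t' → t = t' := by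
    intro z hz1 hz2 t t' ht ht'
    by_contra hne
    exact F2 hmax hcubic (hhat ht) (hhat ht') hne hz1 hz2
  set S : Set V := {x | x = u ∨ x = v ∨ Gh.Adj u x ∨ Gh.Adj v x} with hS
  have hcl : ∀ x ∈ S, ∀ y, Gh.Adj x y → y ∈ S := by
    intro x hx y hy
    rcases hx with rfl | rfl | hx | hx
    · exact Or.inr (Or.inr (Or.inl hy))
    · exact Or.inr (Or.inr (Or.inr hy))
    · by_cases hxv : x = v
      · subst hxv; exact Or.inr (Or.inr (Or.inr hy))
      · obtain ⟨h1', h2'⟩ := h11u x hx hxv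
        exact Or.inl (huniq x h1' h2' y u hy hx.symm)
    · by_cases hxu : x = u
      · subst hxu; exact Or.inr (Or.inr (Or.inl hy))
      · obtain ⟨h1', h2'⟩ := h11v x hx hxu
        exact Or.inr (Or.inl (huniq x h1' h2' y v hy hx.symm))
  have hu_in : u ∈ S := Or.inl rfl
  have ha1S : a1 ∈ S := reach hcl hr hu_in
  have ha2S : a2 ∈ S := reach hcl (hr.trans hadj.reachable) hu_in
  by_cases h1u : a1 = u
  · exact Or.inl h1u
  by_cases h1v : a1 = v
  · exact Or.inr (Or.inl h1v)
  by_cases h2u : a2 = u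
  · exact Or.inr (Or.inr (Or.inl h2u))
  by_cases h2v : a2 = v
  · exact Or.inr (Or.inr (Or.inr h2v))
  exfalso
  rcases ha1S with h | h | hx | hx
  · exact h1u h
  · exact h1v h
  · obtain ⟨h1', h2'⟩ := h11u a1 hx h1v
    exact h2u (huniq a1 h1' h2' a2 u hadj hx.symm)
  · obtain ⟨h1', h2'⟩ := h11v a1 hx h1u
    exact h2v (huniq a1 h1' h2' a2 v hadj hx.symm)

end Stmt6Aux

open Stmt6Aux

theorem stmt6 {V : Type*} [Fintype V] (G : SimpleGraph V) [DecidableRel G.Adj]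
    (hcubic : ∀ v : V, G.degree v = 3) (M1 M2 : Set (Sym2 V))
    (hmax : MaxDisjointPair G M1 M2) :
    (G.deleteEdges (M1 ∪ M2)).IsAcyclic ∧
      ∀ c : (G.deleteEdges (M1 ∪ M2)).ConnectedComponent,
        {e ∈ (G.deleteEdges (M1 ∪ M2)).edgeSet |
          ∀ v ∈ e, (G.deleteEdges (M1 ∪ M2)).connectedComponentMk v = c}.ncard ≤ 3 := by
  classical
  set Gh := G.deleteEdges (M1 ∪ M2) with hGh
  have hhat : ∀ {x y : V}, Gh.Adj x y → hatAdj G M1 M2 x y := by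
    intro x y h; rw [hGh, SimpleGraph.deleteEdges_adj] at h; exact h
  have hmax' := maxpair_symm hmax
  constructor
  · -- acyclicity
    intro v p hp
    cases p with
    | nil => exact hp.ne_nil rfl
    | @cons _ p1 _ h1 t =>
      have htn : t.support.Nodup := by
        have h' := hp.support_nodup
        rwa [SimpleGraph.Walk.support_cons, List.tail_cons] at h'
      cases t with
      | nil => exact h1.ne rfl
      | @cons _ p2 _ h2 t2 =>
        cases t2 with
        | nil =>
          have h3 := hp.three_le_length
          simp at h3
        | @cons _ p3 _ h3 t3 =>
          rw [SimpleGraph.Walk.support_cons] at htn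
          obtain ⟨hp1, htn2⟩ := List.nodup_cons.mp htn
          rw [SimpleGraph.Walk.support_cons] at hp1 htn2
          obtain ⟨hp2, -⟩ := List.nodup_cons.mp htn2
          have hvp2 : v ≠ p2 := by
            intro h
            exact hp2 (h ▸ t3.end_mem_support)
          have hp1p3 : p1 ≠ p3 := by
            intro h
            exact hp1 (by rw [h]; exact List.mem_cons_of_mem _ t3.start_mem_support)
          have ha2 : ∃ y z, y ≠ z ∧ hatAdj G M1 M2 p1 y ∧ hatAdj G M1 M2 p1 z :=
            ⟨v, p2, hvp2, hhat h1.symm, hhat h2⟩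
          have hc2 : ∃ y z, y ≠ z ∧ hatAdj G M1 M2 p3 y ∧ hatAdj G M1 M2 p3 z := by
            cases t3 with
            | nil => exact ⟨p2, p1, fun h => (h2.ne h.symm), hhat h3.symm, hhat h1⟩
            | @cons _ p4 _ h4 t4 =>
              refine ⟨p2, p4, ?_, hhat h3.symm, hhat h4⟩
              intro h
              apply hp2
              rw [h, SimpleGraph.Walk.support_cons]
              exact List.mem_cons_of_mem _ t4.start_mem_support
          exact triple hmax hcubic (hhat h2) (hhat h3) hp1p3 ha2 hc2
  · -- components have at most 3 edges
    intro c
    have hbound1 : ∀ t : V, Gh.connectedComponentMk t = c →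
        (∀ z, Gh.Adj t z → Cov M1 z ∧ Cov M2 z) →
        {e ∈ Gh.edgeSet | ∀ x ∈ e, Gh.connectedComponentMk x = c} ⊆ Gh.incidenceSet t := by
      intro t hmk h11 e he
      obtain ⟨heE, hec⟩ := he
      revert heE hec
      induction e using Sym2.ind with
      | _ x y =>
        intro heE hec
        have hadj : Gh.Adj x y := Gh.mem_edgeSet.mp heE
        have hr : Gh.Reachable t x :=
          SimpleGraph.ConnectedComponent.exact (hmk.trans (hec x (Sym2.mem_mk_left x y)).symm)
        rcases center hmax hcubic h11 hadj hr with h | h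
        · exact ⟨heE, Sym2.mem_iff.mpr (Or.inl h.symm)⟩
        · exact ⟨heE, Sym2.mem_iff.mpr (Or.inr h.symm)⟩
    by_cases hB : ∃ u v : V, Gh.Adj u v ∧ Gh.connectedComponentMk u = c ∧
        Cov M1 u ∧ ¬ Cov M2 u ∧ Cov M2 v ∧ ¬ Cov M1 v
    · obtain ⟨u, v, hadj, hmku, hu1, hu2, hv2, hv1⟩ := hB
      have h11u : ∀ z, Gh.Adj u z → z ≠ v → Cov M1 z ∧ Cov M2 z := by
        intro z hz hzv
        have h2z : Cov M2 z := (F1 hmax' (hat_swap (hhat hz))).resolve_left hu2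
        refine ⟨?_, h2z⟩
        by_contra h1z
        exact F3 hmax' (hat_swap (hat_symm (hhat hz))) (hat_swap (hhat hadj)) hzv
          h2z h1z hv2 hv1 hu1 hu2
      have h11v : ∀ z, Gh.Adj v z → z ≠ u → Cov M1 z ∧ Cov M2 z := by
        intro z hz hzu
        have h1z : Cov M1 z := (F1 hmax (hhat hz)).resolve_left hv1
        refine ⟨h1z, ?_⟩
        by_contra h2z
        exact F3 hmax (hat_symm (hhat hz)) (hat_symm (hhat hadj)) hzu
          h1z h2z hu1 hu2 hv2 hv1
      have hsubB : {e ∈ Gh.edgeSet | ∀ x ∈ e, Gh.connectedComponentMk x = c} ⊆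
          (Gh.incidenceSet u \ {s(u, v)}) ∪ Gh.incidenceSet v := by
        intro e he
        obtain ⟨heE, hec⟩ := he
        revert heE hec
        induction e using Sym2.ind with
        | _ x y =>
          intro heE hec
          have hadj' : Gh.Adj x y := Gh.mem_edgeSet.mp heE
          have hr : Gh.Reachable u x :=
            SimpleGraph.ConnectedComponent.exact (hmku.trans (hec x (Sym2.mem_mk_left x y)).symm)
          have hcases := center2 hmax hcubic h11u h11v hadj' hr
          by_cases hve : v ∈ s(x, y)
          · exact Or.inr ⟨heE, hve⟩
          · have hue : u ∈ s(x, y) := by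
              rcases hcases with h | h | h | h
              · exact Sym2.mem_iff.mpr (Or.inl h.symm)
              · exact absurd (Sym2.mem_iff.mpr (Or.inl h.symm)) hve
              · exact Sym2.mem_iff.mpr (Or.inr h.symm)
              · exact absurd (Sym2.mem_iff.mpr (Or.inr h.symm)) hve
            refine Or.inl ⟨⟨heE, hue⟩, ?_⟩
            intro hsing
            apply hve
            rw [Set.mem_singleton_iff.mp hsing]
            exact Sym2.mem_mk_right u v
      obtain ⟨eu, heu, hueu⟩ := hu1
      obtain ⟨ev, hev, hvev⟩ := hv2
      have hb1 : (Gh.incidenceSet u).ncard ≤ 2 := hat_inc_bound hmax hcubic (Or.inl heu) hueu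
      have hb2 : (Gh.incidenceSet v).ncard ≤ 2 := hat_inc_bound hmax hcubic (Or.inr hev) hvev
      have huvinc : s(u, v) ∈ Gh.incidenceSet u :=
        ⟨Gh.mem_edgeSet.mpr hadj, Sym2.mem_mk_left u v⟩
      have hd : (Gh.incidenceSet u \ {s(u, v)}).ncard = (Gh.incidenceSet u).ncard - 1 :=
        Set.ncard_diff_singleton_of_mem huvinc
      have hm := Set.ncard_le_ncard hsubB (Set.toFinite _)
      have hun := Set.ncard_union_le (Gh.incidenceSet u \ {s(u, v)}) (Gh.incidenceSet v)
      omega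
    by_cases hA : ∃ x : V, Gh.connectedComponentMk x = c ∧ ¬ Cov M1 x ∧ ¬ Cov M2 x
    · obtain ⟨x, hmkx, hx1, hx2⟩ := hA
      have h11 : ∀ z, Gh.Adj x z → Cov M1 z ∧ Cov M2 z := fun z hz =>
        ⟨(F1 hmax (hhat hz)).resolve_left hx1, (F1 hmax' (hat_swap (hhat hz))).resolve_left hx2⟩
      have hsub2 : Gh.incidenceSet x ⊆ G.incidenceSet x := by
        intro e he
        have h' := he.1
        rw [hGh, edgeSet_deleteEdges] at h'
        exact ⟨h'.1, he.2⟩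
      have hm := Set.ncard_le_ncard ((hbound1 x hmkx h11).trans hsub2) (Set.toFinite _)
      have h3 : (G.incidenceSet x).ncard = 3 := by rw [ncard_incidenceSet, hcubic]
      omega
    · push_neg at hA
      rcases Set.eq_empty_or_nonempty
        {e ∈ Gh.edgeSet | ∀ x ∈ e, Gh.connectedComponentMk x = c} with hS0 | ⟨e0, he0⟩
      · rw [hS0]; simp
      have hcen1 : ∀ t : V, Gh.connectedComponentMk t = c → Cov M1 t → ¬ Cov M2 t →
          {e ∈ Gh.edgeSet | ∀ x ∈ e, Gh.connectedComponentMk x = c}.ncard ≤ 3 := by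
        intro t hmk ht1 ht2
        have h11 : ∀ z, Gh.Adj t z → Cov M1 z ∧ Cov M2 z := by
          intro z hz
          have h2z : Cov M2 z := (F1 hmax' (hat_swap (hhat hz))).resolve_left ht2
          refine ⟨?_, h2z⟩
          by_contra h1z
          exact hB ⟨t, z, hz, hmk, ht1, ht2, h2z, h1z⟩
        obtain ⟨et, het, htet⟩ := ht1
        have hm := Set.ncard_le_ncard (hbound1 t hmk h11) (Set.toFinite _)
        have hb : (Gh.incidenceSet t).ncard ≤ 2 := hat_inc_bound hmax hcubic (Or.inl het) htet
        omega
      have hcen2 : ∀ t : V, Gh.connectedComponentMk t = c → Cov M2 t → ¬ Cov M1 t →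
          {e ∈ Gh.edgeSet | ∀ x ∈ e, Gh.connectedComponentMk x = c}.ncard ≤ 3 := by
        intro t hmk ht2 ht1
        have h11 : ∀ z, Gh.Adj t z → Cov M1 z ∧ Cov M2 z := by
          intro z hz
          have h1z : Cov M1 z := (F1 hmax (hhat hz)).resolve_left ht1
          refine ⟨h1z, ?_⟩
          by_contra h2z
          have hmkz : Gh.connectedComponentMk z = c :=
            (SimpleGraph.ConnectedComponent.connectedComponentMk_eq_of_adj hz).symm.trans hmk
          exact hB ⟨z, t, hz.symm, hmkz, h1z, h2z, ht2, ht1⟩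
        obtain ⟨et, het, htet⟩ := ht2
        have hm := Set.ncard_le_ncard (hbound1 t hmk h11) (Set.toFinite _)
        have hb : (Gh.incidenceSet t).ncard ≤ 2 := hat_inc_bound hmax hcubic (Or.inr het) htet
        omega
      obtain ⟨he0E, he0c⟩ := he0
      revert he0E he0c
      induction e0 using Sym2.ind with
      | _ a b =>
        intro he0E he0c
        have hadj : Gh.Adj a b := Gh.mem_edgeSet.mp he0E
        have hmka : Gh.connectedComponentMk a = c := he0c a (Sym2.mem_mk_left a b)
        have hmkb : Gh.connectedComponentMk b = c := he0c b (Sym2.mem_mk_right a b)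
        by_cases hb1 : Cov M1 b <;> by_cases hb2 : Cov M2 b
        · by_cases ha1 : Cov M1 a <;> by_cases ha2 : Cov M2 a
          · -- both endpoints covered by both matchings
            have huniq : ∀ t t', Gh.Adj b t → Gh.Adj b t' → t = t' := by
              intro t t' ht ht'
              by_contra hne
              exact F2 hmax hcubic (hhat ht) (hhat ht') hne hb1 hb2
            have h11 : ∀ z, Gh.Adj b z → Cov M1 z ∧ Cov M2 z := by
              intro z hz
              have hza : z = a := huniq z a hz hadj.symm
              rw [hza]; exact ⟨ha1, ha2⟩
            obtain ⟨et, het, htet⟩ := hb1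
            have hm := Set.ncard_le_ncard (hbound1 b hmkb h11) (Set.toFinite _)
            have hb : (Gh.incidenceSet b).ncard ≤ 2 := hat_inc_bound hmax hcubic (Or.inl het) htet
            omega
          · exact hcen1 a hmka ha1 ha2
          · exact hcen2 a hmka ha2 ha1
          · have := hA a hmka; tauto
        · exact hcen1 b hmkb hb1 hb2
        · exact hcen2 b hmkb hb2 hb1
        · have := hA b hmkb; tauto
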